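/- Let (φ, ψ) be a Bertrand pair with ψ arclength s* and φ arclength s, offset constant c and constant tangent angle θ. Then (ds*/ds)cos θ = 1 - cκ_φ and (ds*/ds)sin θ = cτ_φ. -/

import Mathlib

open scoped RealInnerProductSpace

/-- For a Bertrand pair `(φ, ψ)`, `ψ = φ + (c/κ_φ)N_φ`, with arclength `s*` of `ψ` and
constant tangent angle `θ`, one has `(ds*/ds)cos θ = 1 - cκ_φ` and `(ds*/ds)sin θ = cτ_φ`. -/
theorem bertrand_pair_speed_relations
    (I : Set ℝ) (hI : IsOpen I)
    (φ ψ T N B : ℝ → EuclideanSpace ℝ (Fin 3)) (κ κ' τ σ : ℝ → ℝ) (c θ : ℝ)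
    (hc : c ≠ 0)
    (hκpos : ∀ s ∈ I, 0 < κ s)
    (hφ : ∀ s ∈ I, HasDerivAt φ (T s) s)
    (hT : ∀ s ∈ I, HasDerivAt T (N s) s)
    (hN : ∀ s ∈ I, HasDerivAt N (-(κ s ^ 2) • T s + (κ' s / κ s) • N s + τ s • B s) s)
    (hκ : ∀ s ∈ I, HasDerivAt κ (κ' s) s)
    (hTT : ∀ s ∈ I, ⟪T s, T s⟫ = 1)
    (hBB : ∀ s ∈ I, ⟪B s, B s⟫ = κ s ^ 2)
    (hTB : ∀ s ∈ I, ⟪T s, B s⟫ = 0)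
    (hTN : ∀ s ∈ I, ⟪T s, N s⟫ = 0)
    (hNB : ∀ s ∈ I, ⟪N s, B s⟫ = 0)
    -- `ψ` is the Bertrand mate with offset `c`:
    (hψ : ∀ s, ψ s = φ s + (c / κ s) • N s)
    -- `σ = ds*/ds` is the speed of `ψ`:
    (hσ : ∀ s ∈ I, σ s = ‖deriv ψ s‖)
    -- the unit tangent of `ψ` makes the constant angle `θ` with `T_φ` inside the `T,B`-plane:
    (hangle : ∀ s ∈ I, deriv ψ s = σ s • (Real.cos θ • T s + (Real.sin θ / κ s) • B s)) :
    ∀ s ∈ I, σ s * Real.cos θ = 1 - c * κ s ∧ σ s * Real.sin θ = c * τ s := by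
  intro s hs
  have hκne : κ s ≠ 0 := (hκpos s hs).ne'
  -- derivative of ψ
  have hcoef : HasDerivAt (fun u => c / κ u) (-(c * κ' s) / (κ s) ^ 2) s := by
    have := (hasDerivAt_const s c).div (hκ s hs) hκne
    exact this.congr_deriv (by ring)
  have hsmul : HasDerivAt (fun u => (c / κ u) • N u)
      ((-(c * κ' s) / (κ s) ^ 2) • N s +
        (c / κ s) • (-(κ s ^ 2) • T s + (κ' s / κ s) • N s + τ s • B s)) s := by
    have := hcoef.smul (hN s hs)
    exact this.congr_deriv (add_comm _ _)
  have hψ' : HasDerivAt ψ ((1 - c * κ s) • T s + (c * τ s / κ s) • B s) s := by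
    have h1 : HasDerivAt (fun u => φ u + (c / κ u) • N u)
        (T s + ((-(c * κ' s) / (κ s) ^ 2) • N s +
          (c / κ s) • (-(κ s ^ 2) • T s + (κ' s / κ s) • N s + τ s • B s))) s :=
      (hφ s hs).add hsmul
    have heq : (fun u => φ u + (c / κ u) • N u) = ψ := by
      funext u; rw [hψ u]
    rw [heq] at h1
    convert h1 using 1
    match_scalars <;> field_simp <;> ring
  have hd : deriv ψ s = (1 - c * κ s) • T s + (c * τ s / κ s) • B s := hψ'.deriv
  have hkey : σ s • (Real.cos θ • T s + (Real.sin θ / κ s) • B s)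
      = (1 - c * κ s) • T s + (c * τ s / κ s) • B s := by
    rw [← hangle s hs, hd]
  constructor
  · have := congrArg (fun v => ⟪T s, v⟫) hkey
    simp only [inner_add_right, real_inner_smul_right, hTT s hs, hTB s hs] at this
    linarith [this]
  · have hBT : ⟪B s, T s⟫ = 0 := by rw [real_inner_comm]; exact hTB s hs
    have := congrArg (fun v => ⟪B s, v⟫) hkey
    simp only [inner_add_right, real_inner_smul_right, hBB s hs, hBT] at this
    have hκ2 : (κ s) ^ 2 ≠ 0 := pow_ne_zero 2 hκne
    field_simp at this
    exact mul_right_cancel₀ hκ2 (by linear_combination (κ s) * this)
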